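/- Let μ be a doubling measure and D a system of dyadic cubes. For R ∈ D let E_R = {Q ∈ D : Q ⊇ R}. Suppose m_λ satisfies the lower-volume estimate m_λ(R)/m_λ(Q) ≤ C(ℓ(R)/ℓ(Q))^{n+1} for R ⊆ Q. Then for any r ≥ 1, p > 1 and sufficiently small ε > 0 (with (n+1)(1 − εp) > 0), Σ_{Q ∈ E_R} (m_λ(R)/m_λ(Q)) (log_{1/δ}(ℓ(Q)/ℓ(R)) + 1)^{2r−2} m_λ(Q)^{εp} ≤ C m_λ(R)^{εp}. -/

import Mathlib

open MeasureTheory ENNReal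

/-- A real power with (possibly) negative base is at most the power of the absolute value. -/
lemma stmt16_aux_rpow_le_abs (x y : ℝ) : x ^ y ≤ |x| ^ y :=
  (le_abs_self _).trans (Real.abs_rpow_le_abs_rpow x y)

/-- `log_{δ⁻¹} (δ^k) = -k` for `0 < δ < 1`. -/
lemma stmt16_aux_logb (δ : ℝ) (h0 : 0 < δ) (h1 : δ < 1) (k : ℤ) :
    Real.logb δ⁻¹ (δ ^ k) = -k := by
  have hlog : Real.log δ < 0 := Real.log_neg h0 h1
  rw [Real.logb, Real.log_zpow, Real.log_inv]
  rw [div_neg, mul_div_assoc, div_self (ne_of_lt hlog), mul_one]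

/-- let `μ` be a measure and `D` a system of dyadic cubes (with sidelength
`ℓ(Q) = δ^{gen Q}`) in which each cube has exactly one ancestor per coarser generation, and
suppose the lower-volume estimate `μ(R)/μ(Q) ≤ C (ℓ(R)/ℓ(Q))^{n+1}` holds for `R ⊆ Q`. Then
for `r ≥ 1`, `p > 1` and `ε > 0` small (so that `(n+1)(1-εp) > 0`),
`∑_{Q ⊇ R} (μ(R)/μ(Q)) (log_{1/δ}(ℓ(Q)/ℓ(R)) + 1)^{2r-2} μ(Q)^{εp} ≤ C' μ(R)^{εp}`
uniformly in `R`. -/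
theorem stmt16 {X : Type*} {ι : Type*} [Countable ι] [MeasurableSpace X]
    (μ : Measure X) (Q : ι → Set X) (gen : ι → ℤ)
    (δ : ℝ) (hδ : δ ∈ Set.Ioo (0 : ℝ) 1) (n : ℕ)
    (Cvol : ℝ) (hCvol : 0 < Cvol)
    (hvol : ∀ i j, Q i ⊆ Q j →
      μ (Q i) ≤ ENNReal.ofReal (Cvol * (δ ^ gen i / δ ^ gen j) ^ ((n : ℝ) + 1)) * μ (Q j))
    (hanc : ∀ (i : ι) (k : ℤ), k ≤ gen i → ∃! j, gen j = k ∧ Q i ⊆ Q j)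
    (r p ε : ℝ) (hr : 1 ≤ r) (hp : 1 < p) (hε : 0 < ε)
    (hεp : 0 < ((n : ℝ) + 1) * (1 - ε * p)) :
    ∃ C : ℝ≥0∞, C ≠ ⊤ ∧ ∀ i : ι,
      (∑' j : {j : ι // Q i ⊆ Q j},
          (μ (Q i) / μ (Q (j : ι))) *
            ENNReal.ofReal ((Real.logb δ⁻¹ (δ ^ gen (j : ι) / δ ^ gen i) + 1) ^ (2 * r - 2)) *
            μ (Q (j : ι)) ^ (ε * p))
        ≤ C * μ (Q i) ^ (ε * p) := by
  obtain ⟨hδ0, hδ1⟩ := hδ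
  have hδne : δ ≠ 0 := ne_of_gt hδ0
  have hn1 : (0:ℝ) < (n:ℝ) + 1 := by positivity
  have hs0 : 0 < 1 - ε * p := by nlinarith
  have hεp0 : 0 < ε * p := by nlinarith
  have hw0 : 0 ≤ 2 * r - 2 := by linarith
  -- the geometric ratio
  set ρ : ℝ := δ ^ (((n:ℝ) + 1) * (1 - ε * p)) with hρdef
  have hρ0 : 0 < ρ := Real.rpow_pos_of_pos hδ0 _
  have hρ1 : ρ < 1 := Real.rpow_lt_one hδ0.le hδ1 hεp
  -- the summable series controlling the ancestor part
  set f : ℕ → ℝ := fun m => Cvol ^ (1 - ε * p) * (((m:ℝ) + 1) ^ (2 * r - 2) * ρ ^ m) with hfdef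
  have hfnonneg : ∀ m, 0 ≤ f m := by
    intro m
    have h1 : (0:ℝ) ≤ Cvol ^ (1 - ε * p) := (Real.rpow_pos_of_pos hCvol _).le
    have h2 : (0:ℝ) ≤ ((m:ℝ) + 1) ^ (2 * r - 2) := Real.rpow_nonneg (by positivity) _
    have h3 : (0:ℝ) ≤ ρ ^ m := by positivity
    positivity
  have hfsum : Summable f := by
    set N : ℕ := ⌈2 * r - 2⌉₊ with hN
    have hgeom : Summable (fun m : ℕ => (m:ℝ) ^ N * ρ ^ m) :=
      summable_pow_mul_geometric_of_norm_lt_one N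
        (by rw [Real.norm_eq_abs, abs_of_pos hρ0]; exact hρ1)
    have h2 : Summable (fun m : ℕ => ((m:ℝ) + 1) ^ N * ρ ^ (m + 1)) := by
      have := (summable_nat_add_iff 1).mpr hgeom
      exact this.congr (by intro m; push_cast; ring)
    have h3 : Summable (fun m : ℕ => ((m:ℝ) + 1) ^ N * ρ ^ m) := by
      have := h2.mul_left ρ⁻¹
      refine this.congr ?_
      intro m
      field_simp
      ring
    refine Summable.of_nonneg_of_le hfnonneg ?_ (h3.mul_left (Cvol ^ (1 - ε * p)))
    intro m
    have hbase : (1:ℝ) ≤ (m:ℝ) + 1 := by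
      have : (0:ℝ) ≤ (m:ℝ) := Nat.cast_nonneg m
      linarith
    have hle : ((m:ℝ) + 1) ^ (2 * r - 2) ≤ ((m:ℝ) + 1) ^ (N:ℝ) :=
      Real.rpow_le_rpow_of_exponent_le hbase (Nat.le_ceil _)
    rw [Real.rpow_natCast] at hle
    have hρm : (0:ℝ) ≤ ρ ^ m := by positivity
    have := mul_le_mul_of_nonneg_right hle hρm
    have hC : (0:ℝ) ≤ Cvol ^ (1 - ε * p) := (Real.rpow_pos_of_pos hCvol _).le
    calc f m ≤ Cvol ^ (1 - ε * p) * (((m:ℝ) + 1) ^ N * ρ ^ m) := by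
          exact mul_le_mul_of_nonneg_left this hC
      _ = Cvol ^ (1 - ε * p) * (((m:ℝ) + 1) ^ N * ρ ^ m) := rfl
  -- the copy-count bound
  set M0 : ℕ := ⌈Real.log Cvol / (((n:ℝ) + 1) * Real.log δ⁻¹)⌉₊ with hM0
  set c2 : ℝ≥0∞ := ENNReal.ofReal (((M0:ℝ) + 1) ^ (2 * r - 2)) with hc2
  refine ⟨ENNReal.ofReal (∑' m, f m) + (M0 : ℝ≥0∞) * c2 + 1, by finiteness, ?_⟩
  intro i
  -- basic structure facts about ancestors
  have hcopy : ∀ j, Q i ⊆ Q j → gen i < gen j → Q j ⊆ Q i := by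
    intro j h₀ hg₀
    obtain ⟨u, ⟨hu1, hu2⟩, _⟩ := hanc j (gen i) hg₀.le
    obtain ⟨v, _, hvuniq⟩ := hanc i (gen i) le_rfl
    have : u = i := (hvuniq u ⟨hu1, h₀.trans hu2⟩).trans (hvuniq i ⟨rfl, subset_rfl⟩).symm
    exact this ▸ hu2
  have geninj : ∀ j j', Q i ⊆ Q j → Q i ⊆ Q j' → gen j = gen j' → j = j' := by
    intro j j' hj hj' hg
    by_cases hk : gen j ≤ gen i
    · obtain ⟨u, _, huniq⟩ := hanc i (gen j) hk
      exact (huniq j ⟨rfl, hj⟩).trans (huniq j' ⟨hg.symm, hj'⟩).symm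
    · push_neg at hk
      have h1 : Q j ⊆ Q i := hcopy j hj hk
      obtain ⟨u, _, huniq⟩ := hanc j (gen j) le_rfl
      exact (huniq j ⟨rfl, subset_rfl⟩).trans (huniq j' ⟨hg.symm, h1.trans hj'⟩).symm
  set a : ℝ≥0∞ := μ (Q i) with ha
  -- the summand
  set T : {j : ι // Q i ⊆ Q j} → ℝ≥0∞ := fun j =>
    (a / μ (Q (j : ι))) *
      ENNReal.ofReal ((Real.logb δ⁻¹ (δ ^ gen (j : ι) / δ ^ gen i) + 1) ^ (2 * r - 2)) *
      μ (Q (j : ι)) ^ (ε * p) with hT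
  show ∑' j, T j ≤ _
  -- trivial case: zero measure
  by_cases ha0 : a = 0
  · have : ∀ j, T j = 0 := by
      intro j
      simp [hT, ha0, ENNReal.zero_div]
    simp [tsum_congr this]
  -- trivial case: infinite measure
  by_cases haT : a = ⊤
  · have hC0 : (ENNReal.ofReal (∑' m, f m) + (M0 : ℝ≥0∞) * c2 + 1) ≠ 0 := by simp
    rw [haT, ENNReal.top_rpow_of_pos hεp0, ENNReal.mul_top hC0]
    exact le_top
  -- main case
  -- rewrite the log term
  have hlogterm : ∀ j : ι, Real.logb δ⁻¹ (δ ^ gen j / δ ^ gen i) + 1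
      = ((gen i - gen j : ℤ) : ℝ) + 1 := by
    intro j
    rw [← zpow_sub₀ hδne, stmt16_aux_logb δ hδ0 hδ1]
    push_cast
    ring
  -- pointwise bound on the ancestor part
  have hanc_bound : ∀ j : {j : ι // Q i ⊆ Q j}, gen (j : ι) ≤ gen i →
      T j ≤ ENNReal.ofReal (f ((gen i - gen (j : ι)).toNat)) * a ^ (ε * p) := by
    intro j hle
    set m : ℕ := (gen i - gen (j : ι)).toNat with hm
    have hmz : ((m:ℤ)) = gen i - gen (j : ι) := Int.toNat_of_nonneg (by omega)
    set b : ℝ≥0∞ := μ (Q (j : ι)) with hb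
    by_cases hbT : b = ⊤
    · have : a / b = 0 := by simp [hbT]
      rw [hT]
      simp only [← ha, ← hb, this, zero_mul]
      exact zero_le
    have hab : a ≤ b := measure_mono j.2
    have hb0 : b ≠ 0 := fun h => ha0 (le_antisymm (h ▸ hab) zero_le)
    -- volume estimate
    have hvol' := hvol i (j : ι) j.2
    have hpow : Cvol * (δ ^ gen i / δ ^ gen (j : ι)) ^ ((n:ℝ) + 1)
        = Cvol * δ ^ ((m:ℝ) * ((n:ℝ) + 1)) := by
      rw [← zpow_sub₀ hδne, ← hmz, ← Real.rpow_intCast δ (m:ℤ), ← Real.rpow_mul hδ0.le]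
      push_cast
      ring_nf
    rw [hpow] at hvol'
    have hdiv : a / b ≤ ENNReal.ofReal (Cvol * δ ^ ((m:ℝ) * ((n:ℝ) + 1))) :=
      ENNReal.div_le_of_le_mul hvol'
    -- decompose a/b * b^(εp) = (a/b)^(1-εp) * a^(εp)
    have hdb0 : a / b ≠ 0 := by
      simp only [ne_eq, ENNReal.div_eq_zero_iff, not_or]
      exact ⟨ha0, hbT⟩
    have hdbT : a / b ≠ ⊤ := by
      exact (ENNReal.div_lt_top haT hb0).ne
    have hdecomp : (a / b) * b ^ (ε * p) = (a / b) ^ (1 - ε * p) * a ^ (ε * p) := by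
      have h1 : (a / b) = (a / b) ^ (1 - ε * p) * (a / b) ^ (ε * p) := by
        rw [← ENNReal.rpow_add _ _ hdb0 hdbT]
        norm_num
      conv_lhs => rw [h1]
      rw [mul_assoc, ← ENNReal.mul_rpow_of_nonneg _ _ hεp0.le,
        ENNReal.div_mul_cancel hb0 hbT]
    -- the log term
    have hlog : Real.logb δ⁻¹ (δ ^ gen (j : ι) / δ ^ gen i) + 1 = (m:ℝ) + 1 := by
      rw [hlogterm (j : ι), ← hmz]
      push_cast
      ring
    have hratio : (a / b) ^ (1 - ε * p)
        ≤ ENNReal.ofReal (Cvol ^ (1 - ε * p) * ρ ^ m) := by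
      calc (a / b) ^ (1 - ε * p)
          ≤ (ENNReal.ofReal (Cvol * δ ^ ((m:ℝ) * ((n:ℝ) + 1)))) ^ (1 - ε * p) :=
            ENNReal.rpow_le_rpow hdiv hs0.le
        _ = ENNReal.ofReal ((Cvol * δ ^ ((m:ℝ) * ((n:ℝ) + 1))) ^ (1 - ε * p)) := by
            rw [← ENNReal.ofReal_rpow_of_pos (by positivity)]
        _ = ENNReal.ofReal (Cvol ^ (1 - ε * p) * ρ ^ m) := by
            congr 1
            rw [Real.mul_rpow hCvol.le (Real.rpow_nonneg hδ0.le _),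
              ← Real.rpow_natCast ρ m, hρdef, ← Real.rpow_mul hδ0.le, ← Real.rpow_mul hδ0.le]
            ring_nf
    calc T j = (a / b) * b ^ (ε * p) * ENNReal.ofReal (((m:ℝ) + 1) ^ (2 * r - 2)) := by
          rw [hT]
          simp only [← ha, ← hb, hlog]
          ring
      _ = (a / b) ^ (1 - ε * p) * ENNReal.ofReal (((m:ℝ) + 1) ^ (2 * r - 2)) * a ^ (ε * p) := by
          rw [hdecomp]; ring
      _ ≤ ENNReal.ofReal (Cvol ^ (1 - ε * p) * ρ ^ m)
            * ENNReal.ofReal (((m:ℝ) + 1) ^ (2 * r - 2)) * a ^ (ε * p) := by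
          gcongr
      _ = ENNReal.ofReal (f m) * a ^ (ε * p) := by
          rw [← ENNReal.ofReal_mul (by positivity), hfdef]
          congr 2
          ring
  -- pointwise facts for the copy part
  have hcopy_meas : ∀ j : {j : ι // Q i ⊆ Q j}, gen i < gen (j : ι) → μ (Q (j : ι)) = a := by
    intro j hgt
    exact le_antisymm (measure_mono (hcopy _ j.2 hgt)) (measure_mono j.2)
  have hcopy_small : ∀ j : {j : ι // Q i ⊆ Q j}, gen i < gen (j : ι) →
      (gen (j : ι) - gen i - 1).toNat < M0 := by
    intro j hgt
    set m : ℕ := (gen (j : ι) - gen i - 1).toNat with hm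
    have hmz : ((m:ℤ)) = gen (j : ι) - gen i - 1 := Int.toNat_of_nonneg (by omega)
    have hsub : Q (j : ι) ⊆ Q i := hcopy _ j.2 hgt
    have hvol' := hvol (j : ι) i hsub
    rw [hcopy_meas j hgt] at hvol'
    have hpow : Cvol * (δ ^ gen (j : ι) / δ ^ gen i) ^ ((n:ℝ) + 1)
        = Cvol * δ ^ ((((m:ℝ) + 1)) * ((n:ℝ) + 1)) := by
      rw [← zpow_sub₀ hδne]
      have : gen (j : ι) - gen i = ((m:ℤ) + 1) := by omega
      rw [this, ← Real.rpow_intCast δ ((m:ℤ) + 1), ← Real.rpow_mul hδ0.le]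
      push_cast
      ring_nf
    rw [hpow] at hvol'
    have hone : (1:ℝ≥0∞) ≤ ENNReal.ofReal (Cvol * δ ^ ((((m:ℝ) + 1)) * ((n:ℝ) + 1))) := by
      by_contra hcon
      push_neg at hcon
      have : a < a := lt_of_le_of_lt hvol' (by
        calc ENNReal.ofReal (Cvol * δ ^ ((((m:ℝ) + 1)) * ((n:ℝ) + 1))) * a
            < 1 * a := by
              rw [mul_comm _ a, mul_comm 1 a]; exact ENNReal.mul_lt_mul_right ha0 haT hcon
          _ = a := one_mul a)
      exact absurd this (lt_irrefl a)
    have hone' : (1:ℝ) ≤ Cvol * δ ^ ((((m:ℝ) + 1)) * ((n:ℝ) + 1)) :=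
      ENNReal.one_le_ofReal.mp hone
    -- take logarithms
    have hLpos : 0 < Real.log δ⁻¹ := Real.log_pos (one_lt_inv_iff₀.mpr ⟨hδ0, hδ1⟩)
    have hlogle : 0 ≤ Real.log (Cvol * δ ^ ((((m:ℝ) + 1)) * ((n:ℝ) + 1))) := by
      rw [← Real.log_one]
      exact Real.log_le_log (by norm_num) hone'
    rw [Real.log_mul (ne_of_gt hCvol) (ne_of_gt (Real.rpow_pos_of_pos hδ0 _)),
      Real.log_rpow hδ0] at hlogle
    have hlogδ : Real.log δ = -Real.log δ⁻¹ := by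
      rw [Real.log_inv]; ring
    rw [hlogδ] at hlogle
    have hkey : ((m:ℝ) + 1) * (((n:ℝ) + 1) * Real.log δ⁻¹) ≤ Real.log Cvol := by nlinarith
    have hdenom : 0 < ((n:ℝ) + 1) * Real.log δ⁻¹ := by positivity
    have : ((m:ℝ) + 1) ≤ Real.log Cvol / (((n:ℝ) + 1) * Real.log δ⁻¹) :=
      (le_div_iff₀ hdenom).mpr hkey
    have hle : ((m:ℝ) + 1) ≤ (M0 : ℝ) := this.trans (Nat.le_ceil _)
    have : (m:ℝ) < (M0:ℝ) := by linarith
    exact_mod_cast this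
  have hcopy_bound : ∀ j : {j : ι // Q i ⊆ Q j}, gen i < gen (j : ι) →
      T j ≤ c2 * a ^ (ε * p) := by
    intro j hgt
    have hb : μ (Q (j : ι)) = a := hcopy_meas j hgt
    have hda : a / a ≤ 1 := ENNReal.div_self_le_one
    have hlog2 : ENNReal.ofReal ((Real.logb δ⁻¹ (δ ^ gen (j : ι) / δ ^ gen i) + 1)
        ^ (2 * r - 2)) ≤ c2 := by
      rw [hlogterm (j : ι), hc2]
      apply ENNReal.ofReal_le_ofReal
      set x : ℝ := ((gen i - gen (j : ι) : ℤ) : ℝ) + 1 with hx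
      calc x ^ (2 * r - 2) ≤ |x| ^ (2 * r - 2) := stmt16_aux_rpow_le_abs x _
        _ ≤ ((M0:ℝ) + 1) ^ (2 * r - 2) := by
            apply Real.rpow_le_rpow (abs_nonneg x) _ hw0
            have h1 := hcopy_small j hgt
            have h2 : ((gen (j : ι) - gen i - 1).toNat : ℤ) = gen (j : ι) - gen i - 1 :=
              Int.toNat_of_nonneg (by omega)
            rw [hx, abs_le]
            constructor <;> [skip; skip] <;>
              · push_cast
                have h3 : ((gen (j : ι) : ℝ) - gen i - 1) < (M0:ℝ) := by
                  exact_mod_cast (by exact_mod_cast h2 ▸ (Int.ofNat_lt.mpr h1) :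
                    (gen (j : ι) - gen i - 1 : ℤ) < (M0:ℤ))
                nlinarith [Int.lt_iff_add_one_le.mp hgt,
                  (by exact_mod_cast Int.lt_iff_add_one_le.mp hgt :
                    (gen i : ℝ) + 1 ≤ (gen (j : ι) : ℝ))]
    calc T j ≤ 1 * c2 * a ^ (ε * p) := by
          rw [hT]
          simp only [← ha, hb]
          gcongr
      _ = c2 * a ^ (ε * p) := by ring
  -- split the sum
  set S : Set {j : ι // Q i ⊆ Q j} := {j | gen (j : ι) ≤ gen i} with hS
  rw [← Summable.tsum_add_tsum_compl (s := S) ENNReal.summable ENNReal.summable]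
  have hpart1 : ∑' j : S, T j ≤ ENNReal.ofReal (∑' m, f m) * a ^ (ε * p) := by
    have hinj : Function.Injective (fun j : S => (gen i - gen ((j : {j : ι // Q i ⊆ Q j}) : ι)).toNat) := by
      intro j j' hjj
      have h1 : ((gen i - gen ((j : {j : ι // Q i ⊆ Q j}) : ι)).toNat : ℤ)
          = gen i - gen ((j : {j : ι // Q i ⊆ Q j}) : ι) := Int.toNat_of_nonneg (by
            have := j.2; simp only [hS, Set.mem_setOf_eq] at this; omega)
      have h2 : ((gen i - gen ((j' : {j : ι // Q i ⊆ Q j}) : ι)).toNat : ℤ)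
          = gen i - gen ((j' : {j : ι // Q i ⊆ Q j}) : ι) := Int.toNat_of_nonneg (by
            have := j'.2; simp only [hS, Set.mem_setOf_eq] at this; omega)
      have hgen : gen ((j : {j : ι // Q i ⊆ Q j}) : ι) = gen ((j' : {j : ι // Q i ⊆ Q j}) : ι) := by
        have := congrArg (fun m : ℕ => (m : ℤ)) hjj
        simp only at this
        omega
      have := geninj _ _ (j : {j : ι // Q i ⊆ Q j}).2 (j' : {j : ι // Q i ⊆ Q j}).2 hgen
      exact Subtype.ext (Subtype.ext this)
    calc ∑' j : S, T j
        ≤ ∑' j : S, (fun m => ENNReal.ofReal (f m) * a ^ (ε * p))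
            ((fun j : S => (gen i - gen ((j : {j : ι // Q i ⊆ Q j}) : ι)).toNat) j) := by
          apply ENNReal.tsum_le_tsum
          intro j
          exact hanc_bound (j : {j : ι // Q i ⊆ Q j}) j.2
      _ ≤ ∑' m : ℕ, ENNReal.ofReal (f m) * a ^ (ε * p) :=
          ENNReal.tsum_comp_le_tsum_of_injective hinj _
      _ = (∑' m : ℕ, ENNReal.ofReal (f m)) * a ^ (ε * p) := ENNReal.tsum_mul_right
      _ = ENNReal.ofReal (∑' m, f m) * a ^ (ε * p) := by
          rw [ENNReal.ofReal_tsum_of_nonneg hfnonneg hfsum]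
  have hpart2 : ∑' j : ↥Sᶜ, T j ≤ (M0 : ℝ≥0∞) * c2 * a ^ (ε * p) := by
    set G : ℕ → ℝ≥0∞ := fun k => if k < M0 then c2 * a ^ (ε * p) else 0 with hG
    have hinj : Function.Injective
        (fun j : ↥Sᶜ => (gen ((j : {j : ι // Q i ⊆ Q j}) : ι) - gen i - 1).toNat) := by
      intro j j' hjj
      have hj2 : gen i < gen ((j : {j : ι // Q i ⊆ Q j}) : ι) := by
        have := j.2; simp only [hS, Set.mem_compl_iff, Set.mem_setOf_eq, not_le] at this
        exact this
      have hj2' : gen i < gen ((j' : {j : ι // Q i ⊆ Q j}) : ι) := by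
        have := j'.2; simp only [hS, Set.mem_compl_iff, Set.mem_setOf_eq, not_le] at this
        exact this
      have h1 : ((gen ((j : {j : ι // Q i ⊆ Q j}) : ι) - gen i - 1).toNat : ℤ)
          = gen ((j : {j : ι // Q i ⊆ Q j}) : ι) - gen i - 1 := Int.toNat_of_nonneg (by omega)
      have h2 : ((gen ((j' : {j : ι // Q i ⊆ Q j}) : ι) - gen i - 1).toNat : ℤ)
          = gen ((j' : {j : ι // Q i ⊆ Q j}) : ι) - gen i - 1 := Int.toNat_of_nonneg (by omega)
      have hgen : gen ((j : {j : ι // Q i ⊆ Q j}) : ι) = gen ((j' : {j : ι // Q i ⊆ Q j}) : ι) := by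
        have := congrArg (fun m : ℕ => (m : ℤ)) hjj
        simp only at this
        omega
      have := geninj _ _ (j : {j : ι // Q i ⊆ Q j}).2 (j' : {j : ι // Q i ⊆ Q j}).2 hgen
      exact Subtype.ext (Subtype.ext this)
    calc ∑' j : ↥Sᶜ, T j
        ≤ ∑' j : ↥Sᶜ, G ((fun j : ↥Sᶜ =>
            (gen ((j : {j : ι // Q i ⊆ Q j}) : ι) - gen i - 1).toNat) j) := by
          apply ENNReal.tsum_le_tsum
          intro j
          have hj2 : gen i < gen ((j : {j : ι // Q i ⊆ Q j}) : ι) := by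
            have := j.2; simp only [hS, Set.mem_compl_iff, Set.mem_setOf_eq, not_le] at this
            exact this
          have hk := hcopy_small (j : {j : ι // Q i ⊆ Q j}) hj2
          simp only [hG, if_pos hk]
          exact hcopy_bound (j : {j : ι // Q i ⊆ Q j}) hj2
      _ ≤ ∑' k : ℕ, G k := ENNReal.tsum_comp_le_tsum_of_injective hinj _
      _ = ∑ k ∈ Finset.range M0, G k := by
          apply tsum_eq_sum
          intro k hk
          simp only [Finset.mem_range, not_lt] at hk
          simp [hG, Nat.not_lt.mpr hk]
      _ ≤ ∑ _k ∈ Finset.range M0, c2 * a ^ (ε * p) := by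
          apply Finset.sum_le_sum
          intro k _
          simp only [hG]
          split_ifs <;> simp
      _ = (M0 : ℝ≥0∞) * c2 * a ^ (ε * p) := by
          rw [Finset.sum_const, Finset.card_range, nsmul_eq_mul]
          ring
  calc (∑' j : S, T j) + ∑' j : ↥Sᶜ, T j
      ≤ ENNReal.ofReal (∑' m, f m) * a ^ (ε * p) + (M0 : ℝ≥0∞) * c2 * a ^ (ε * p) :=
        add_le_add hpart1 hpart2
    _ ≤ (ENNReal.ofReal (∑' m, f m) + (M0 : ℝ≥0∞) * c2 + 1) * a ^ (ε * p) := by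
        rw [add_mul, add_mul, one_mul]
        exact le_add_of_le_of_nonneg le_rfl zero_le
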